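/- For the circle S¹ with geodesic metric of diameter π and any δ with 0 < δ < π, the chromatic number of the open Borsuk graph satisfies χ(Bor(S¹, δ)) = ⌈2π/δ⌉. In particular, the circle can be properly colored with ⌈2π/δ⌉ colors by partitioning it into ⌈2π/δ⌉ half-open arcs each of length ≤ δ, and no proper coloring with fewer colors exists. -/

import Mathlib

/-- The circle of circumference `2π` (geodesic metric of diameter `π`). -/
abbrev Circle2pi : Type := AddCircle (2 * Real.pi)

/-- The open Borsuk graph on the circle at scale `δ`: edges join points at
geodesic distance strictly greater than `δ`. -/
def borsukCircle (δ : ℝ) : SimpleGraph Circle2pi :=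
  SimpleGraph.fromRel (fun x y => δ < dist x y)

open Real

noncomputable abbrev tp : ℝ := 2 * Real.pi

lemma tp_pos : 0 < tp := by positivity

instance : Fact ((0:ℝ) < 2 * Real.pi) := ⟨tp_pos⟩


lemma lemA (p d : ℕ) (h3 : 3*d < p) (T : Finset ℕ) (hTp : ∀ i ∈ T, i < p)
    (hT : ∀ i ∈ T, ∀ j ∈ T, min (Nat.dist i j) (p - Nat.dist i j) ≤ d) : T.card ≤ d + 1 := by
  rcases T.eq_empty_or_nonempty with rfl | hne
  · simp
  set x := T.min' hne with hx
  set y := T.max' hne with hy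
  have hxT := T.min'_mem hne
  have hyT := T.max'_mem hne
  have hxy : x ≤ y := T.min'_le _ hyT
  have hyp : y < p := hTp _ hyT
  have hcover : ∀ z ∈ T, z ≤ x + d ∨ x + (p - d) ≤ z := by
    intro z hz
    have h1 := hT z hz x hxT
    have h2 : x ≤ z := T.min'_le _ hz
    have h3' : z < p := hTp _ hz
    rw [Nat.dist_comm, Nat.dist_eq_sub_of_le h2] at h1
    omega
  by_cases hD : y - x ≤ d
  · have : T ⊆ Finset.Icc x y := fun z hz => Finset.mem_Icc.2 ⟨T.min'_le _ hz, T.le_max' _ hz⟩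
    calc T.card ≤ (Finset.Icc x y).card := Finset.card_le_card this
    _ = y - x + 1 := by rw [Nat.card_Icc]; omega
    _ ≤ d + 1 := by omega
  · set L := T.filter (fun z => z ≤ x + d) with hL
    set H := T.filter (fun z => x + (p - d) ≤ z) with hH
    have hyH : y ∈ H := by
      rw [hH, Finset.mem_filter]
      refine ⟨hyT, ?_⟩
      rcases hcover y hyT with h | h
      · omega
      · exact h
    have hHne : H.Nonempty := ⟨y, hyH⟩
    set h0 := H.min' hHne with hh0
    have hh0H := H.min'_mem hHne
    have hh0T : h0 ∈ T := (Finset.mem_filter.1 hh0H).1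
    have hh0x : x + (p - d) ≤ h0 := (Finset.mem_filter.1 hh0H).2
    have hkey : ∀ l ∈ L, l + (p - d) ≤ h0 := by
      intro l hl
      have hlT : l ∈ T := (Finset.mem_filter.1 hl).1
      have hld : l ≤ x + d := (Finset.mem_filter.1 hl).2
      have h1 := hT h0 hh0T l hlT
      have hlh : l ≤ h0 := by omega
      rw [Nat.dist_comm, Nat.dist_eq_sub_of_le hlh] at h1
      have : h0 < p := hTp _ hh0T
      omega
    have hLsub : L ⊆ Finset.Icc x (h0 - (p - d)) := by
      intro l hl
      have := hkey l hl
      exact Finset.mem_Icc.2 ⟨T.min'_le _ (Finset.mem_filter.1 hl).1, by omega⟩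
    have hHsub : H ⊆ Finset.Icc h0 y := by
      intro h hh
      exact Finset.mem_Icc.2 ⟨H.min'_le _ hh, T.le_max' _ (Finset.mem_filter.1 hh).1⟩
    have hTsub : T ⊆ L ∪ H := by
      intro z hz
      rcases hcover z hz with h | h
      · exact Finset.mem_union_left _ (Finset.mem_filter.2 ⟨hz, h⟩)
      · exact Finset.mem_union_right _ (Finset.mem_filter.2 ⟨hz, h⟩)
    calc T.card ≤ (L ∪ H).card := Finset.card_le_card hTsub
    _ ≤ L.card + H.card := Finset.card_union_le _ _
    _ ≤ (Finset.Icc x (h0 - (p-d))).card + (Finset.Icc h0 y).card :=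
        Nat.add_le_add (Finset.card_le_card hLsub) (Finset.card_le_card hHsub)
    _ ≤ d + 1 := by
        have hD2 : p - (y - x) ≤ d := by
          have h1 := hT y hyT x hxT
          rw [Nat.dist_comm, Nat.dist_eq_sub_of_le hxy] at h1
          omega
        have hh0y : h0 ≤ y := T.le_max' _ hh0T
        have hxh0 : x ≤ h0 := by omega
        rw [Nat.card_Icc, Nat.card_Icc]
        omega


lemma intabs_key (p c : ℕ) (hc : c < p) (m : ℤ) :
    ((min c (p - c) : ℕ) : ℝ) ≤ |((c : ℝ)) - (m : ℝ) * p| := by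
  have key : ((min c (p - c) : ℕ) : ℤ) ≤ |((c : ℤ)) - m * p| := by
    rcases le_or_gt m 0 with hm | hm
    · have h1 : m * (p:ℤ) ≤ 0 := mul_nonpos_of_nonpos_of_nonneg hm (by positivity)
      have : ((c:ℤ)) - m * p ≥ c := by omega
      rw [abs_of_nonneg (by omega)]
      omega
    · have h1 : (p:ℤ) ≤ m * p := le_mul_of_one_le_left (by positivity) (by omega)
      rw [abs_of_nonpos (by omega)]
      omega
  calc ((min c (p - c) : ℕ) : ℝ) = (((min c (p - c) : ℕ) : ℤ) : ℝ) := by norm_cast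
  _ ≤ ((|((c : ℤ)) - m * p| : ℤ) : ℝ) := by exact_mod_cast key
  _ = |((c : ℝ)) - (m : ℝ) * p| := by push_cast; ring

lemma norm_sample_ge (p : ℕ) (hp : 0 < p) (c : ℕ) (hc : c < p) :
    (min c (p - c) : ℕ) * (tp / p) ≤ ‖(((c : ℝ) * (tp / p) : ℝ) : AddCircle tp)‖ := by
  rw [AddCircle.norm_eq]
  set m : ℤ := round (tp⁻¹ * ((c : ℝ) * (tp / p))) with hm
  have hpR : (0:ℝ) < p := by exact_mod_cast hp
  have h1 : (c : ℝ) * (tp / p) - (m : ℝ) * tp = ((c : ℝ) - (m : ℝ) * p) * (tp / p) := by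
    field_simp
  rw [h1, abs_mul, abs_of_pos (by positivity : (0:ℝ) < tp / p)]
  exact mul_le_mul_of_nonneg_right (intabs_key p c hc m) (by positivity)

lemma sample_circdist_le (δ : ℝ) (p : ℕ) (hp : 0 < p) (i j : ℕ) (hi : i < p) (hj : j < p)
    (h : dist (((i : ℝ) * (tp / p) : ℝ) : AddCircle tp) (((j : ℝ) * (tp / p) : ℝ)) ≤ δ) :
    ((min (Nat.dist i j) (p - Nat.dist i j) : ℕ) : ℝ) * (tp / p) ≤ δ := by
  rcases le_total i j with hij | hij
  · have e : (((j - i : ℕ) : ℝ) * (tp / p) : ℝ) = (j:ℝ)*(tp/p) - (i:ℝ)*(tp/p) := by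
      push_cast [hij]; ring
    have hd : dist (((i : ℝ) * (tp / p) : ℝ) : AddCircle tp) (((j : ℝ) * (tp / p) : ℝ))
        = ‖((((j - i : ℕ) : ℝ) * (tp / p) : ℝ) : AddCircle tp)‖ := by
      rw [dist_eq_norm', e, AddCircle.coe_sub]
    rw [Nat.dist_eq_sub_of_le hij]
    refine le_trans ?_ (hd ▸ h)
    exact norm_sample_ge p hp (j - i) (by omega)
  · have e : (((i - j : ℕ) : ℝ) * (tp / p) : ℝ) = (i:ℝ)*(tp/p) - (j:ℝ)*(tp/p) := by
      push_cast [hij]; ring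
    have hd : dist (((i : ℝ) * (tp / p) : ℝ) : AddCircle tp) (((j : ℝ) * (tp / p) : ℝ))
        = ‖((((i - j : ℕ) : ℝ) * (tp / p) : ℝ) : AddCircle tp)‖ := by
      rw [dist_eq_norm, e, AddCircle.coe_sub]
    rw [Nat.dist_comm, Nat.dist_eq_sub_of_le hij]
    refine le_trans ?_ (hd ▸ h)
    exact norm_sample_ge p hp (i - j) (by omega)


lemma colorable_upper (δ : ℝ) (hδ : 0 < δ) (hδπ : δ < Real.pi) :
    (borsukCircle δ).Colorable ⌈tp / δ⌉₊ := by
  set n := ⌈tp / δ⌉₊ with hn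
  have hn0 : 0 < n := Nat.ceil_pos.mpr (by positivity)
  have hnR : (0:ℝ) < n := by exact_mod_cast hn0
  have hval : ∀ x : Circle2pi, (AddCircle.equivIco tp 0 x : ℝ) ∈ Set.Ico (0:ℝ) tp := by
    intro x
    simpa using (AddCircle.equivIco tp 0 x).2
  have hbound : ∀ x : Circle2pi, ⌊(AddCircle.equivIco tp 0 x : ℝ) * n / tp⌋₊ < n := by
    intro x
    obtain ⟨h0, h1⟩ := hval x
    rw [Nat.floor_lt (by positivity)]
    rw [div_lt_iff₀ tp_pos]
    calc (AddCircle.equivIco tp 0 x : ℝ) * n < tp * n := by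
          apply mul_lt_mul_of_pos_right h1 hnR
    _ = n * tp := by ring
  refine ⟨SimpleGraph.Coloring.mk
    (fun x => ⟨⌊(AddCircle.equivIco tp 0 x : ℝ) * n / tp⌋₊, hbound x⟩) ?_⟩
  intro x y hadj heq
  rw [borsukCircle, SimpleGraph.fromRel_adj] at hadj
  obtain ⟨hne, hor⟩ := hadj
  have hdist : δ < dist x y := by
    rcases hor with h | h
    · exact h
    · rwa [dist_comm]
  set vx := (AddCircle.equivIco tp 0 x : ℝ) with hvx
  set vy := (AddCircle.equivIco tp 0 y : ℝ) with hvy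
  have hfl : ⌊vx * n / tp⌋₊ = ⌊vy * n / tp⌋₊ := congrArg Fin.val heq
  -- |vx - vy| < tp / n
  have habs : |vx - vy| < tp / n := by
    have h1 : ((⌊vx * n / tp⌋₊ : ℕ):ℝ) ≤ vx * n / tp := Nat.floor_le (by have := (hval x).1; positivity)
    have h2 : vx * n / tp < (⌊vx * n / tp⌋₊ : ℕ) + 1 := Nat.lt_floor_add_one _
    have h3 : ((⌊vx * n / tp⌋₊ : ℕ):ℝ) ≤ vy * n / tp := by
      rw [hfl]; exact Nat.floor_le (by have := (hval y).1; positivity)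
    have h4 : vy * n / tp < (⌊vx * n / tp⌋₊ : ℕ) + 1 := by
      rw [hfl]; exact Nat.lt_floor_add_one _
    have h5 : |vx * n / tp - vy * n / tp| < 1 := by rw [abs_lt]; constructor <;> nlinarith
    have h6 : |vx - vy| * (n / tp) < 1 := by
      have he : vx * n / tp - vy * n / tp = (vx - vy) * (n / tp) := by ring
      rw [he, abs_mul, abs_of_pos (show (0:ℝ) < (n:ℝ) / tp by positivity)] at h5
      exact h5
    rw [lt_div_iff₀ hnR]
    calc |vx - vy| * n = |vx - vy| * (n / tp) * tp := by field_simp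
    _ < 1 * tp := by apply mul_lt_mul_of_pos_right h6 tp_pos
    _ = tp := by ring
  have htpn : tp / n ≤ δ := by
    rw [div_le_iff₀ hnR]
    have : tp / δ ≤ (n:ℝ) := Nat.le_ceil _
    calc tp = tp / δ * δ := by field_simp
    _ ≤ n * δ := mul_le_mul_of_nonneg_right this hδ.le
    _ = δ * n := by ring
  have habs2 : |vx - vy| < δ := lt_of_lt_of_le habs htpn
  have hxy : dist x y = |vx - vy| := by
    have hx : ((vx : ℝ) : AddCircle tp) = x := (AddCircle.equivIco tp 0).symm_apply_apply x
    have hy : ((vy : ℝ) : AddCircle tp) = y := (AddCircle.equivIco tp 0).symm_apply_apply y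
    rw [← hx, ← hy, dist_eq_norm, ← AddCircle.coe_sub]
    rw [AddCircle.norm_coe_eq_abs_iff tp tp_pos.ne']
    have : |tp| / 2 = Real.pi := by rw [abs_of_pos tp_pos]; ring
    rw [this]
    linarith [habs2, hδπ]
  rw [hxy] at hdist
  linarith


lemma not_colorable_two (δ : ℝ) (hδ : 0 < δ) (hδπ : δ < Real.pi) :
    ¬ (borsukCircle δ).Colorable 2 := by
  intro h
  obtain ⟨C⟩ := h
  set M := ⌈Real.pi / (Real.pi - δ)⌉₊ + 1 with hM
  set m := 2 * M + 1 with hm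
  have hm1 : 1 ≤ m := by omega
  have hmR : (0:ℝ) < m := by exact_mod_cast Nat.lt_of_lt_of_le Nat.zero_lt_one hm1
  have hMge : Real.pi / (Real.pi - δ) ≤ (M:ℝ) := by
    calc Real.pi / (Real.pi - δ) ≤ (⌈Real.pi / (Real.pi - δ)⌉₊ : ℝ) := Nat.le_ceil _
    _ ≤ (M:ℝ) := by rw [hM]; push_cast; linarith
  have hMm : (M:ℝ) < (m:ℝ) := by
    rw [hm]; push_cast
    have : (0:ℝ) ≤ (M:ℝ) := by positivity
    linarith
  have hmge : Real.pi / (Real.pi - δ) < (m:ℝ) := lt_of_le_of_lt hMge hMm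
  have hπδ : 0 < Real.pi - δ := by linarith
  have hkey : δ * m < Real.pi * (m - 1) := by
    have := (div_lt_iff₀ hπδ).mp hmge
    nlinarith
  set s : ℝ := Real.pi * (m + 1) / m with hs
  have hnorm : ‖((s : ℝ) : AddCircle tp)‖ = Real.pi * ((m:ℝ) - 1) / m := by
    rw [AddCircle.norm_eq]
    have hround : round (tp⁻¹ * s) = 1 := by
      have he : tp⁻¹ * s = ((m:ℝ) + 1) / (2 * m) := by
        rw [hs]; field_simp
      rw [he, round_eq]
      refine Int.floor_eq_iff.mpr ⟨?_, ?_⟩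
      · rw [Int.cast_one]
        have h1 : (1:ℝ)/2 ≤ ((m:ℝ)+1)/(2*(m:ℝ)) := by
          rw [div_le_div_iff₀ (by norm_num) (by positivity)]
          nlinarith
        linarith
      · rw [Int.cast_one]
        have h2 : ((m:ℝ)+1)/(2*(m:ℝ)) ≤ 1 := by
          rw [div_le_one (by positivity)]
          have h1m : (1:ℝ) ≤ (m:ℝ) := by exact_mod_cast hm1
          linarith
        linarith
    rw [hround]
    have : s - (1:ℤ) * tp = -(Real.pi * ((m:ℝ) - 1) / m) := by
      rw [hs]; push_cast; field_simp; ring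
    have hm1R : (1:ℝ) ≤ (m:ℝ) := by exact_mod_cast hm1
    have hnn : (0:ℝ) ≤ Real.pi * ((m:ℝ) - 1) / m := by
      apply div_nonneg _ hmR.le
      nlinarith [Real.pi_pos]
    rw [this, abs_neg, abs_of_nonneg hnn]
  have hsgt : δ < ‖((s : ℝ) : AddCircle tp)‖ := by
    rw [hnorm, lt_div_iff₀ hmR]
    nlinarith
  have hadj : ∀ j : ℕ, (borsukCircle δ).Adj (((j:ℝ) * s : ℝ) : Circle2pi) (((j+1:ℕ):ℝ) * s : ℝ) := by
    intro j
    have hdistc : dist ((((j:ℕ):ℝ) * s : ℝ) : Circle2pi) ((((j+1:ℕ):ℝ) * s : ℝ)) = ‖((s : ℝ) : AddCircle tp)‖ := by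
      rw [dist_eq_norm']
      rw [← AddCircle.coe_sub]
      congr 1
      push_cast; ring
    rw [borsukCircle, SimpleGraph.fromRel_adj]
    constructor
    · intro heq
      rw [heq, dist_self] at hdistc
      linarith [hsgt, hδ, hdistc.symm.le]
    · left; rw [hdistc]; exact hsgt
  have hpar : ∀ j : ℕ, (C ((((j:ℕ):ℝ) * s : ℝ) : Circle2pi) = C ((((0:ℕ):ℝ) * s : ℝ)) ↔ Even j) := by
    intro j
    induction j with
    | zero => simp
    | succ j ih =>
      have hne := C.valid (hadj j)
      have fin2 : ∀ a b c : Fin 2, a ≠ b → ((b = c) ↔ ¬(a = c)) := by decide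
      rw [fin2 _ _ _ hne, ih, Nat.even_add_one]
  have hms : ((((m:ℕ):ℝ) * s : ℝ) : Circle2pi) = ((((0:ℕ):ℝ) * s : ℝ)) := by
    rw [← sub_eq_zero, ← AddCircle.coe_sub, AddCircle.coe_eq_zero_iff]
    refine ⟨(M + 1 : ℤ), ?_⟩
    rw [hs, hm]
    push_cast
    have : ((2:ℝ) * M + 1) ≠ 0 := by positivity
    field_simp
    simp only [zsmul_eq_mul]
    push_cast
    ring
  have hev := (hpar m).mp (congrArg C hms)
  rw [hm] at hev
  rcases hev with ⟨t, ht⟩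
  omega


lemma not_colorable_sample (δ : ℝ) (hδ : 0 < δ) (k : ℕ) (hk : 3 ≤ k)
    (hkθ : (k:ℝ) < tp / δ) : ¬ (borsukCircle δ).Colorable k := by
  intro h
  obtain ⟨C⟩ := h
  have hkδ : (k:ℝ) * δ < tp := by
    rw [lt_div_iff₀ hδ] at hkθ
    exact hkθ
  set ε : ℝ := 1 - (k:ℝ) * δ / tp with hε
  have hε0 : 0 < ε := by
    rw [hε]
    have : (k:ℝ) * δ / tp < 1 := by rw [div_lt_one tp_pos]; exact hkδ
    linarith
  obtain ⟨p, hp⟩ := exists_nat_gt ((k:ℝ) / ε)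
  have hp0 : 0 < p := by
    by_contra hc
    push_neg at hc
    interval_cases p
    have : (0:ℝ) < (k:ℝ) / ε := by positivity
    norm_num at hp
    linarith
  have hpR : (0:ℝ) < p := by exact_mod_cast hp0
  set d := ⌊δ * p / tp⌋₊ with hd
  have hdle : (d:ℝ) ≤ δ * p / tp := Nat.floor_le (by positivity)
  have hkp : (k:ℝ) < ε * p := by
    rw [div_lt_iff₀ hε0] at hp
    linarith [hp]
  have hkd : k * (d + 1) < p := by
    have hR : (k:ℝ) * ((d:ℝ) + 1) < p := by
      calc (k:ℝ) * ((d:ℝ) + 1) ≤ (k:ℝ) * (δ * p / tp + 1) := by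
            apply mul_le_mul_of_nonneg_left (by linarith) (by positivity)
      _ = (k:ℝ) * δ / tp * p + k := by field_simp
      _ = (1 - ε) * p + k := by rw [hε]; ring
      _ < (1 - ε) * p + ε * p := by linarith
      _ = p := by ring
    have : ((k * (d+1) : ℕ) : ℝ) < (p:ℝ) := by push_cast; linarith
    exact_mod_cast this
  have h3d : 3 * d < p := by
    have h3δ : 3 * δ < tp := by
      have : (3:ℝ) ≤ (k:ℝ) := by exact_mod_cast hk
      nlinarith
    have hR : ((3 * d : ℕ) : ℝ) < (p:ℝ) := by
      push_cast
      calc (3:ℝ) * d ≤ 3 * (δ * p / tp) := by linarith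
      _ = (3 * δ) / tp * p := by ring
      _ < 1 * p := by
          apply mul_lt_mul_of_pos_right _ hpR
          rw [div_lt_one tp_pos]
          exact h3δ
      _ = p := by ring
    exact_mod_cast hR
  -- pigeonhole
  have hmaps : ∀ j ∈ Finset.range p, C (((j:ℝ) * (tp / p) : ℝ) : Circle2pi) ∈ (Finset.univ : Finset (Fin k)) := by
    intro j _; exact Finset.mem_univ _
  have hcard : (Finset.univ : Finset (Fin k)).card * (d + 1) < (Finset.range p).card := by
    rw [Finset.card_univ, Fintype.card_fin, Finset.card_range]
    exact hkd
  obtain ⟨b, -, hb⟩ := Finset.exists_lt_card_fiber_of_mul_lt_card_of_maps_to hmaps hcard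
  set T := (Finset.range p).filter (fun j : ℕ => C (((j:ℝ) * (tp / p) : ℝ) : Circle2pi) = b) with hT
  have hTp : ∀ i ∈ T, i < p := by
    intro i hi
    exact Finset.mem_range.1 (Finset.mem_filter.1 hi).1
  have hTd : ∀ i ∈ T, ∀ j ∈ T, min (Nat.dist i j) (p - Nat.dist i j) ≤ d := by
    intro i hi j hj
    have hib := (Finset.mem_filter.1 hi).2
    have hjb := (Finset.mem_filter.1 hj).2
    have hsame : C (((i:ℝ) * (tp / p) : ℝ) : Circle2pi) = C (((j:ℝ) * (tp / p) : ℝ) : Circle2pi) := by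
      rw [hib, hjb]
    have hnadj : ¬ (borsukCircle δ).Adj (((i:ℝ) * (tp / p) : ℝ) : Circle2pi) (((j:ℝ) * (tp / p) : ℝ)) := by
      intro hadj
      exact C.valid hadj hsame
    rw [borsukCircle, SimpleGraph.fromRel_adj] at hnadj
    push_neg at hnadj
    have hdle' : dist (((i:ℝ) * (tp / p) : ℝ) : Circle2pi) (((j:ℝ) * (tp / p) : ℝ)) ≤ δ := by
      by_cases heq : (((i:ℝ) * (tp / p) : ℝ) : Circle2pi) = (((j:ℝ) * (tp / p) : ℝ) : Circle2pi)
      · rw [heq, dist_self]; exact hδ.le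
      · have := hnadj heq
        exact this.1
    have := sample_circdist_le δ p hp0 i j (hTp i hi) (hTp j hj) hdle'
    -- from (min)*(tp/p) ≤ δ deduce min ≤ d
    have hmin : ((min (Nat.dist i j) (p - Nat.dist i j) : ℕ) : ℝ) ≤ δ * p / tp := by
      rw [le_div_iff₀ tp_pos]
      have htpp : (0:ℝ) < tp / p := by positivity
      calc ((min (Nat.dist i j) (p - Nat.dist i j) : ℕ) : ℝ) * tp
          = ((min (Nat.dist i j) (p - Nat.dist i j) : ℕ) : ℝ) * (tp / p) * p := by field_simp
      _ ≤ δ * p := mul_le_mul_of_nonneg_right this hpR.le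
    exact Nat.le_floor hmin
  have := lemA p d h3d T hTp hTd
  omega


theorem stmt15 (δ : ℝ) (hδ : 0 < δ) (hδπ : δ < Real.pi) :
    (borsukCircle δ).chromaticNumber = (⌈2 * Real.pi / δ⌉₊ : ℕ∞) := by
  set n := ⌈2 * Real.pi / δ⌉₊ with hn
  have hn3 : 3 ≤ n := by
    rw [hn]
    have : (2:ℝ) < 2 * Real.pi / δ := by
      rw [lt_div_iff₀ hδ]
      nlinarith [Real.pi_pos]
    have h2 : 2 < ⌈2 * Real.pi / δ⌉₊ := Nat.lt_ceil.mpr this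
    omega
  have hupper : (borsukCircle δ).chromaticNumber ≤ (n : ℕ∞) :=
    (colorable_upper δ hδ hδπ).chromaticNumber_le
  have hnotcol : ¬ (borsukCircle δ).Colorable (n - 1) := by
    rcases Nat.lt_or_ge (n - 1) 3 with h | h
    · have hn1 : n - 1 = 2 := by omega
      rw [hn1]
      exact not_colorable_two δ hδ hδπ
    · apply not_colorable_sample δ hδ (n - 1) h
      have h1 : ((n:ℕ) - 1 : ℕ) < ⌈tp / δ⌉₊ := by
        have : ⌈tp / δ⌉₊ = n := by rw [hn]
        omega
      exact_mod_cast Nat.lt_ceil.mp h1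
  refine le_antisymm hupper ?_
  by_contra hlt
  push_neg at hlt
  have hcast : ((n:ℕ) : ℕ∞) = ((n - 1 : ℕ) : ℕ∞) + 1 := by
    have h : n = (n - 1) + 1 := by omega
    conv_lhs => rw [h]
    push_cast
    rfl
  rw [hcast] at hlt
  have hle : (borsukCircle δ).chromaticNumber ≤ ((n - 1 : ℕ) : ℕ∞) :=
    (ENat.lt_add_one_iff (by exact_mod_cast ENat.coe_ne_top _)).mp hlt
  exact hnotcol (SimpleGraph.chromaticNumber_le_iff_colorable.mp hle)
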